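/- Let Γ ∈ ℝ^{n×m} be a matrix each of whose rows has at most two nonzero entries, and suppose the SR graph of Γ contains no o-cycle. Then Γ is R-sortable: there exists d ∈ {−1,+1}^m such that for every row index k and all distinct column indices i, j one has d_i d_j Γ_{ki} Γ_{kj} ≤ 0. -/

import Mathlib

structure SRGraph where
  S : Type
  R : Type
  E : Type
  endS : E → S
  endR : E → R
  sgn : E → ℤ
  sgn_eq : ∀ e, sgn e = 1 ∨ sgn e = -1
  lbl : E → ℝ
  lbl_pos : ∀ e, 0 < lbl e

namespace SRGraph

variable (G : SRGraph)

/-- Vertices of an SR graph: S-vertices and R-vertices. -/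
def Vert := G.S ⊕ G.R

/-- An edge `e` is incident to a vertex `x`. -/
def inc (e : G.E) (x : G.Vert) : Prop :=
  x = Sum.inl (G.endS e) ∨ x = Sum.inr (G.endR e)

/-- A (non-self-intersecting) path of length `k` in an SR graph: an alternating
sequence of vertices and edges; vertices are pairwise distinct except that the
initial and terminal vertex may coincide (in which case the path is closed). -/
structure Path (k : ℕ) where
  vert : Fin (k+1) → G.Vert
  edge : Fin k → G.E
  edge_src : ∀ i : Fin k, G.inc (edge i) (vert i.castSucc)
  edge_tgt : ∀ i : Fin k, G.inc (edge i) (vert i.succ)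
  edge_inj : Function.Injective edge
  vert_nodup : ∀ i j : Fin (k+1), vert i = vert j →
    i = j ∨ (i = 0 ∧ j = Fin.last k) ∨ (i = Fin.last k ∧ j = 0)

variable {G}

/-- The sign of a path: the product of the signs of its edges. -/
def Path.sign {k : ℕ} (p : G.Path k) : ℤ := ∏ i, G.sgn (p.edge i)

/-- The parity of a path of even length `k`: `(-1)^(k/2)` times its sign. -/
def Path.parity {k : ℕ} (p : G.Path k) : ℤ := (-1) ^ (k / 2) * p.sign

def Path.IsClosed {k : ℕ} (p : G.Path k) : Prop := p.vert (Fin.last k) = p.vert 0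

/-- A cycle: a closed path of positive length. -/
def Path.IsCycle {k : ℕ} (p : G.Path k) : Prop := 0 < k ∧ p.IsClosed

/-- The graph contains an o-cycle, i.e. a cycle of parity `-1`. -/
def HasOCycle (G : SRGraph) : Prop :=
  ∃ (k : ℕ) (p : G.Path k), p.IsCycle ∧ p.parity = -1

/-- The S-degree of `G` is at most 2: no S-vertex has three distinct incident edges. -/
def SDegreeLE2 (G : SRGraph) : Prop :=
  ∀ s : G.S, ∀ e₁ e₂ e₃ : G.E,
    G.endS e₁ = s → G.endS e₂ = s → G.endS e₃ = s → e₁ = e₂ ∨ e₁ = e₃ ∨ e₂ = e₃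

/-- The R-degree of `G` is at most 2: no R-vertex has three distinct incident edges. -/
def RDegreeLE2 (G : SRGraph) : Prop :=
  ∀ r : G.R, ∀ e₁ e₂ e₃ : G.E,
    G.endR e₁ = r → G.endR e₂ = r → G.endR e₃ = r → e₁ = e₂ ∨ e₁ = e₃ ∨ e₂ = e₃

/-- `G` is connected: any two vertices are joined by a path. -/
def Connected (G : SRGraph) : Prop :=
  ∀ x y : G.Vert, ∃ (k : ℕ) (p : G.Path k), p.vert 0 = x ∧ p.vert (Fin.last k) = y

end SRGraph

/-- The SR graph of a real matrix `Γ`: S-vertices are rows, R-vertices are columns,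
with an edge `{S i, R j}` whenever `Γ i j ≠ 0`, signed by the sign of `Γ i j` and
labelled `|Γ i j|`. -/
noncomputable def SRofMatrix {n m : ℕ} (Γ : Matrix (Fin n) (Fin m) ℝ) : SRGraph where
  S := Fin n
  R := Fin m
  E := {p : Fin n × Fin m // Γ p.1 p.2 ≠ 0}
  endS := fun e => e.1.1
  endR := fun e => e.1.2
  sgn := fun e => if 0 < Γ e.1.1 e.1.2 then 1 else -1
  sgn_eq := fun e => by (try dsimp only); split
                        · exact Or.inl rfl
                        · exact Or.inr rfl
  lbl := fun e => |Γ e.1.1 e.1.2|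
  lbl_pos := fun e => abs_pos.mpr e.2

open SRGraph

section Aux

open Finset

/-- telescoping product -/
lemma tele_prod (N : ℕ) (f : ℕ → ℝ) (hf : ∀ i, f i * f i = 1) :
    ∏ i ∈ Finset.range N, (f i * f (i + 1)) = f 0 * f N := by
  induction N with
  | zero => simp [(hf 0).symm]
  | succ N ih =>
    rw [Finset.prod_range_succ, ih]
    linear_combination (f 0 * f (N + 1)) * hf N

/-- pairing a product over range (2*N) -/
lemma pair_prod {M : Type*} [CommMonoid M] (N : ℕ) (g : ℕ → M) :
    ∏ i ∈ Finset.range (2 * N), g i = ∏ t ∈ Finset.range N, (g (2 * t) * g (2 * t + 1)) := by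
  induction N with
  | zero => simp
  | succ N ih =>
    have h2 : 2 * (N + 1) = (2 * N + 1) + 1 := by ring
    rw [h2, Finset.prod_range_succ, Finset.prod_range_succ, ih, Finset.prod_range_succ,
      mul_assoc]

lemma prod_pm {α : Type*} {R : Type*} [CommRing R] (s : Finset α) (f : α → R)
    (hf : ∀ i ∈ s, f i = 1 ∨ f i = -1) : (∏ i ∈ s, f i) = 1 ∨ (∏ i ∈ s, f i) = -1 := by
  refine Finset.prod_induction f (fun z => z = 1 ∨ z = -1) ?_ (Or.inl rfl) hf
  rintro a b (rfl | rfl) (rfl | rfl) <;> simp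

/-- sign decomposition of a nonzero real -/
lemma sgn_mul_abs (a : ℝ) (ha : a ≠ 0) :
    ((if 0 < a then (1 : ℤ) else -1 : ℤ) : ℝ) * |a| = a := by
  rcases lt_or_gt_of_ne ha with h | h
  · rw [if_neg (by linarith), abs_of_neg h]; ring
  · rw [if_pos h, abs_of_pos h]; ring

end Aux

section Core

open Finset

/-- integer sign of a real -/
noncomputable def sI (a : ℝ) : ℤ := if 0 < a then 1 else -1

lemma sI_mul_abs (a : ℝ) (ha : a ≠ 0) : ((sI a : ℤ) : ℝ) * |a| = a := by
  rcases lt_or_gt_of_ne ha with h | h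
  · rw [sI, if_neg (by linarith), abs_of_neg h]; push_cast; ring
  · rw [sI, if_pos h, abs_of_pos h]; push_cast; ring

lemma coreC {n m : ℕ} (Γ : Matrix (Fin n) (Fin m) ℝ)
    (hno : ¬ (SRofMatrix Γ).HasOCycle)
    (L : ℕ) [NeZero L] (hL : 2 ≤ L) (x : Fin L → Fin m) (kk : Fin L → Fin n)
    (hx : Function.Injective x) (hk : Function.Injective kk)
    (h1 : ∀ t, Γ (kk t) (x t) ≠ 0) (h2 : ∀ t, Γ (kk t) (x (t + 1)) ≠ 0) :
    0 < (-1 : ℝ) ^ L * ∏ t, (Γ (kk t) (x t) * Γ (kk t) (x (t + 1))) := by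
  have hL0 : 0 < L := by omega
  set G := SRofMatrix Γ with hG
  -- wrapped index
  set w : ℕ → Fin L := fun a => ⟨a % L, Nat.mod_lt _ hL0⟩ with hwdef
  have hone : ((1 : Fin L) : ℕ) = 1 := by
    rw [Fin.val_one']; exact Nat.mod_eq_of_lt (by omega)
  have hw : ∀ a : ℕ, w (a + 1) = w a + 1 := by
    intro a
    rw [Fin.ext_iff, Fin.add_def]
    simp only [hwdef, hone]
    rw [Nat.mod_add_mod]
  have hwlt : ∀ (a : ℕ) (ha : a < L), w a = ⟨a, ha⟩ := by
    intro a ha; exact Fin.ext (Nat.mod_eq_of_lt ha)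
  have h1' : ∀ a : ℕ, Γ (kk (w a)) (x (w a)) ≠ 0 := fun a => h1 _
  have h2' : ∀ a : ℕ, Γ (kk (w a)) (x (w a + 1)) ≠ 0 := fun a => h2 _
  -- the path data
  set vert : Fin (2 * L + 1) → G.Vert := fun a =>
    if a.val % 2 = 1 then Sum.inl (kk (w (a.val / 2))) else Sum.inr (x (w (a.val / 2)))
    with hvert
  set edge : Fin (2 * L) → G.E := fun e =>
    if e.val % 2 = 1 then ⟨(kk (w (e.val / 2)), x (w (e.val / 2) + 1)), h2' _⟩
    else ⟨(kk (w (e.val / 2)), x (w (e.val / 2))), h1' _⟩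
    with hedge
  have hsrc : ∀ i : Fin (2 * L), G.inc (edge i) (vert i.castSucc) := by
    intro i
    have hc : (i.castSucc : ℕ) = i.val := rfl
    rcases Nat.mod_two_eq_zero_or_one i.val with h | h
    · right
      simp only [G, SRofMatrix, SRGraph.Vert, hvert, hedge, hc, h, if_neg (by omega : ¬ i.val % 2 = 1)]
      rfl
    · left
      simp only [G, SRofMatrix, SRGraph.Vert, hvert, hedge, hc, h, if_pos h]
      rfl
  have htgt : ∀ i : Fin (2 * L), G.inc (edge i) (vert i.succ) := by
    intro i
    have hc : (i.succ : ℕ) = i.val + 1 := rfl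
    rcases Nat.mod_two_eq_zero_or_one i.val with h | h
    · left
      simp only [G, SRofMatrix, SRGraph.Vert, hvert, hedge, hc, if_pos (by omega : (i.val + 1) % 2 = 1),
        if_neg (by omega : ¬ i.val % 2 = 1)]
      rw [show (i.val + 1) / 2 = i.val / 2 by omega]
    · right
      simp only [G, SRofMatrix, SRGraph.Vert, hvert, hedge, hc, if_neg (by omega : ¬ (i.val + 1) % 2 = 1), if_pos h]
      rw [show (i.val + 1) / 2 = i.val / 2 + 1 by omega, hw]
  have hwinj : ∀ a b : ℕ, a < L → b < L → w a = w b → a = b := by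
    intro a b ha hb hab
    have := congrArg Fin.val hab
    simpa [hwdef, Nat.mod_eq_of_lt ha, Nat.mod_eq_of_lt hb] using this
  have hwsucc_ne : ∀ a : ℕ, a < L → w a + 1 ≠ w a := by
    intro a ha hcon
    have := congrArg Fin.val hcon
    rw [Fin.add_def] at this
    simp only [hwdef, hone, Nat.mod_eq_of_lt ha] at this
    rcases Nat.lt_or_ge (a + 1) L with h' | h'
    · rw [Nat.mod_eq_of_lt (by omega)] at this; omega
    · have : (a + 1) % L = 0 := by
        have : a + 1 = L := by omega
        simp [this]
      omega
  have hval : ∀ (u v : {p : Fin n × Fin m // Γ p.1 p.2 ≠ 0}), u = v →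
      u.val.1 = v.val.1 ∧ u.val.2 = v.val.2 := by
    rintro u v rfl; exact ⟨rfl, rfl⟩
  have hinj : Function.Injective edge := by
    intro e e' hee
    have he2 : e.val / 2 < L := by omega
    have he2' : e'.val / 2 < L := by omega
    rcases Nat.mod_two_eq_zero_or_one e.val with h | h <;>
      rcases Nat.mod_two_eq_zero_or_one e'.val with h' | h'
    · simp only [G, SRofMatrix, SRGraph.Vert, hedge, if_neg (by omega : ¬ e.val % 2 = 1),
        if_neg (by omega : ¬ e'.val % 2 = 1)] at hee
      obtain ⟨hA, hB⟩ := hval _ _ hee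
      have := hwinj _ _ he2 he2' (hk hA)
      exact Fin.ext (by omega)
    · simp only [G, SRofMatrix, SRGraph.Vert, hedge, if_neg (by omega : ¬ e.val % 2 = 1), if_pos h'] at hee
      obtain ⟨hA, hB⟩ := hval _ _ hee
      have heq := hwinj _ _ he2 he2' (hk hA)
      exact absurd (hx hB).symm (by rw [heq]; exact hwsucc_ne _ he2')
    · simp only [G, SRofMatrix, SRGraph.Vert, hedge, if_pos h, if_neg (by omega : ¬ e'.val % 2 = 1)] at hee
      obtain ⟨hA, hB⟩ := hval _ _ hee
      have heq := hwinj _ _ he2 he2' (hk hA)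
      exact absurd (hx hB) (by rw [heq]; exact hwsucc_ne _ he2')
    · simp only [G, SRofMatrix, SRGraph.Vert, hedge, if_pos h, if_pos h'] at hee
      obtain ⟨hA, hB⟩ := hval _ _ hee
      have := hwinj _ _ he2 he2' (hk hA)
      exact Fin.ext (by omega)
  have hnd : ∀ a b : Fin (2 * L + 1), vert a = vert b →
      a = b ∨ (a = 0 ∧ b = Fin.last (2 * L)) ∨ (a = Fin.last (2 * L) ∧ b = 0) := by
    intro a b hab
    have ha2 : a.val / 2 ≤ L := by omega
    have hb2 : b.val / 2 ≤ L := by omega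
    rcases Nat.mod_two_eq_zero_or_one a.val with h | h <;>
      rcases Nat.mod_two_eq_zero_or_one b.val with h' | h'
    · -- both even
      simp only [G, SRofMatrix, SRGraph.Vert, hvert, if_neg (by omega : ¬ a.val % 2 = 1),
        if_neg (by omega : ¬ b.val % 2 = 1)] at hab
      have hx2 := hx (Sum.inr.inj hab)
      have hmod : a.val / 2 % L = b.val / 2 % L := congrArg Fin.val hx2
      rcases Nat.lt_or_ge (a.val / 2) L with hA | hA <;>
        rcases Nat.lt_or_ge (b.val / 2) L with hB | hB
      · rw [Nat.mod_eq_of_lt hA, Nat.mod_eq_of_lt hB] at hmod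
        exact Or.inl (Fin.ext (by omega))
      · have hBL : b.val / 2 = L := by omega
        rw [Nat.mod_eq_of_lt hA, hBL, Nat.mod_self] at hmod
        refine Or.inr (Or.inl ⟨Fin.ext ?_, Fin.ext ?_⟩) <;> simp only [Fin.val_zero, Fin.val_last] <;> omega
      · have hAL : a.val / 2 = L := by omega
        rw [hAL, Nat.mod_self, Nat.mod_eq_of_lt hB] at hmod
        refine Or.inr (Or.inr ⟨Fin.ext ?_, Fin.ext ?_⟩) <;> simp only [Fin.val_zero, Fin.val_last] <;> omega
      · exact Or.inl (Fin.ext (by omega))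
    · simp only [G, SRofMatrix, SRGraph.Vert, hvert, if_neg (by omega : ¬ a.val % 2 = 1), if_pos h'] at hab
      exact absurd hab.symm (Sum.inl_ne_inr)
    · simp only [G, SRofMatrix, SRGraph.Vert, hvert, if_pos h, if_neg (by omega : ¬ b.val % 2 = 1)] at hab
      exact absurd hab (Sum.inl_ne_inr)
    · -- both odd
      simp only [G, SRofMatrix, SRGraph.Vert, hvert, if_pos h, if_pos h'] at hab
      have hk2 := hk (Sum.inl.inj hab)
      have ha2' : a.val / 2 < L := by omega
      have hb2' : b.val / 2 < L := by omega
      have := hwinj _ _ ha2' hb2' hk2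
      exact Or.inl (Fin.ext (by omega))
  set P : G.Path (2 * L) := ⟨vert, edge, hsrc, htgt, hinj, hnd⟩ with hP
  have hclosed : P.IsClosed := by
    show vert (Fin.last (2 * L)) = vert 0
    have hlast : ((Fin.last (2 * L)) : ℕ) = 2 * L := rfl
    have h0 : ((0 : Fin (2 * L + 1)) : ℕ) = 0 := rfl
    simp only [G, SRofMatrix, SRGraph.Vert, hvert, hlast, h0, if_neg (by omega : ¬ 2 * L % 2 = 1),
      if_neg (by omega : ¬ 0 % 2 = 1)]
    congr 1
    apply congrArg
    rw [Fin.ext_iff]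
    simp only [hwdef]
    rw [show 2 * L / 2 = L by omega, Nat.mod_self]
    simp
  have hcyc : P.IsCycle := ⟨by omega, hclosed⟩
  -- parity is 1
  have hsgn : ∀ i, G.sgn (P.edge i) = 1 ∨ G.sgn (P.edge i) = -1 := fun i => G.sgn_eq _
  have hsign_pm := prod_pm Finset.univ (fun i => G.sgn (P.edge i)) (fun i _ => hsgn i)
  have hpow_pm : (-1 : ℤ) ^ L = 1 ∨ (-1 : ℤ) ^ L = -1 := by
    rcases Nat.even_or_odd L with h | h
    · exact Or.inl h.neg_one_pow
    · exact Or.inr h.neg_one_pow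
  have hpar : P.parity = (-1 : ℤ) ^ L * ∏ i, G.sgn (P.edge i) := by
    rw [SRGraph.Path.parity, SRGraph.Path.sign, show 2 * L / 2 = L by omega]
  have hparity : P.parity = 1 := by
    have hnot : ¬ P.parity = -1 := by
      intro hcontra
      exact hno ⟨2 * L, P, hcyc, hcontra⟩
    rcases hsign_pm with hs | hs <;> rcases hpow_pm with hp | hp <;>
      rw [hpar, hs, hp] at hnot ⊢ <;> norm_num at hnot <;> norm_num
  rw [hpar] at hparity
  -- compute the edge signs
  have hsgn_edge : ∀ e : Fin (2 * L), G.sgn (edge e) =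
      if e.val % 2 = 1 then sI (Γ (kk (w (e.val / 2))) (x (w (e.val / 2) + 1)))
      else sI (Γ (kk (w (e.val / 2))) (x (w (e.val / 2)))) := by
    intro e
    by_cases he : e.val % 2 = 1
    · rw [if_pos he]; simp only [G, SRofMatrix, SRGraph.Vert, hedge, if_pos he]; rfl
    · rw [if_neg he]; simp only [G, SRofMatrix, SRGraph.Vert, hedge, if_neg he]; rfl
  set F : ℕ → ℤ := fun i => if h : i < 2 * L then G.sgn (edge ⟨i, h⟩) else 1 with hF
  set gZ : ℕ → ℤ := fun t => if h : t < L then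
      sI (Γ (kk ⟨t, h⟩) (x ⟨t, h⟩)) * sI (Γ (kk ⟨t, h⟩) (x (⟨t, h⟩ + 1))) else 1 with hgZ
  have step1 : ∏ i : Fin (2 * L), G.sgn (P.edge i)
      = ∏ t : Fin L, (sI (Γ (kk t) (x t)) * sI (Γ (kk t) (x (t + 1)))) := by
    have e1 : ∏ i : Fin (2 * L), G.sgn (P.edge i) = ∏ i ∈ Finset.range (2 * L), F i := by
      rw [← Fin.prod_univ_eq_prod_range]
      refine Finset.prod_congr rfl fun i _ => ?_
      show G.sgn (edge i) = F i.val
      rw [hF]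
      simp only [dif_pos i.isLt, Fin.eta]
    have e2 : ∏ t : Fin L, (sI (Γ (kk t) (x t)) * sI (Γ (kk t) (x (t + 1))))
        = ∏ t ∈ Finset.range L, gZ t := by
      rw [← Fin.prod_univ_eq_prod_range]
      refine Finset.prod_congr rfl fun t _ => ?_
      rw [hgZ]
      simp only [dif_pos t.isLt, Fin.eta]
    rw [e1, pair_prod, e2]
    refine Finset.prod_congr rfl fun t ht => ?_
    rw [Finset.mem_range] at ht
    have h2t : 2 * t < 2 * L := by omega
    have h2t1 : 2 * t + 1 < 2 * L := by omega
    rw [hF]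
    simp only [dif_pos h2t, dif_pos h2t1]
    rw [hsgn_edge ⟨2 * t, h2t⟩, hsgn_edge ⟨2 * t + 1, h2t1⟩]
    have v1 : ((⟨2 * t, h2t⟩ : Fin (2 * L)) : ℕ) = 2 * t := rfl
    have v2 : ((⟨2 * t + 1, h2t1⟩ : Fin (2 * L)) : ℕ) = 2 * t + 1 := rfl
    rw [v1, v2, if_neg (show ¬ (2 * t) % 2 = 1 by omega),
      if_pos (show (2 * t + 1) % 2 = 1 by omega),
      show 2 * t / 2 = t by omega, show (2 * t + 1) / 2 = t by omega, hwlt t ht]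
    simp only [hgZ, dif_pos ht]
  rw [step1] at hparity
  -- turn the sign identity into positivity of the real product
  have h11 : ((-1 : ℤ) ^ L) * ((-1 : ℤ) ^ L) = 1 := by
    rw [← pow_add]; exact Even.neg_one_pow ⟨L, rfl⟩
  have hprodZ : ∏ t : Fin L, (sI (Γ (kk t) (x t)) * sI (Γ (kk t) (x (t + 1)))) = (-1 : ℤ) ^ L := by
    calc ∏ t : Fin L, (sI (Γ (kk t) (x t)) * sI (Γ (kk t) (x (t + 1))))
        = ((-1 : ℤ) ^ L) * (((-1 : ℤ) ^ L) * ∏ t : Fin L, (sI (Γ (kk t) (x t)) * sI (Γ (kk t) (x (t + 1))))) := by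
          rw [← mul_assoc, h11, one_mul]
      _ = (-1 : ℤ) ^ L := by rw [hparity, mul_one]
  have key : ∏ t : Fin L, (Γ (kk t) (x t) * Γ (kk t) (x (t + 1)))
      = (-1 : ℝ) ^ L * ∏ t : Fin L, (|Γ (kk t) (x t)| * |Γ (kk t) (x (t + 1))|) := by
    have hper : ∀ t : Fin L, Γ (kk t) (x t) * Γ (kk t) (x (t + 1))
        = ((sI (Γ (kk t) (x t)) * sI (Γ (kk t) (x (t + 1))) : ℤ) : ℝ)
          * (|Γ (kk t) (x t)| * |Γ (kk t) (x (t + 1))|) := by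
      intro t
      have e1 := sI_mul_abs _ (h1 t)
      have e2 := sI_mul_abs _ (h2 t)
      push_cast
      linear_combination (-(Γ (kk t) (x (t + 1)))) * e1
        + (-(((sI (Γ (kk t) (x t)) : ℤ) : ℝ) * |Γ (kk t) (x t)|)) * e2
    rw [Finset.prod_congr rfl fun t _ => hper t, Finset.prod_mul_distrib,
      ← Int.cast_prod, hprodZ]
    push_cast
    ring
  rw [key, ← mul_assoc]
  have h11R : ((-1 : ℝ) ^ L) * ((-1 : ℝ) ^ L) = 1 := by
    rw [← pow_add]; exact Even.neg_one_pow ⟨L, rfl⟩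
  rw [h11R, one_mul]
  exact Finset.prod_pos fun t _ => mul_pos (abs_pos.2 (h1 t)) (abs_pos.2 (h2 t))

end Core

section MatrixSide

open Finset

variable {n m : ℕ}

/-- the column graph of a matrix: two columns are adjacent if some row is
nonzero in both. -/
def colGraph (Γ : Matrix (Fin n) (Fin m) ℝ) : SimpleGraph (Fin m) where
  Adj i j := i ≠ j ∧ ∃ k, Γ k i ≠ 0 ∧ Γ k j ≠ 0
  symm := ⟨by rintro i j ⟨hij, k, h1, h2⟩; exact ⟨hij.symm, k, h2, h1⟩⟩
  loopless := ⟨by rintro i ⟨hii, -⟩; exact hii rfl⟩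

/-- the sign datum attached to a pair of columns -/
noncomputable def sigma (Γ : Matrix (Fin n) (Fin m) ℝ) : Fin m → Fin m → ℝ := fun i j =>
  if h : ∃ k, Γ k i ≠ 0 ∧ Γ k j ≠ 0 then
    (if 0 < Γ h.choose i * Γ h.choose j then -1 else 1) else 1

lemma sigma_pm (Γ : Matrix (Fin n) (Fin m) ℝ) (i j : Fin m) :
    sigma Γ i j = 1 ∨ sigma Γ i j = -1 := by
  rw [sigma]; split_ifs <;> simp

lemma inj2 {α : Type*} (a b : α) (hab : a ≠ b) : Function.Injective ![a, b] := by
  intro u v huv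
  fin_cases u <;> fin_cases v <;> simp_all

/-- two rows hitting the same pair of columns have sign-consistent products -/
lemma A0 (Γ : Matrix (Fin n) (Fin m) ℝ) (hno : ¬ (SRofMatrix Γ).HasOCycle)
    (i j : Fin m) (k k' : Fin n) (hij : i ≠ j)
    (h1 : Γ k i ≠ 0) (h2 : Γ k j ≠ 0) (h3 : Γ k' i ≠ 0) (h4 : Γ k' j ≠ 0) :
    0 < (Γ k i * Γ k j) * (Γ k' i * Γ k' j) := by
  by_cases hkk : k = k'
  · subst hkk
    exact mul_self_pos.mpr (mul_ne_zero h1 h2)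
  · have hc := coreC Γ hno 2 (by norm_num) ![i, j] ![k, k']
      (inj2 i j hij) (inj2 k k' hkk) ?_ ?_
    · rw [Fin.prod_univ_two] at hc
      have h01 : ((0 : Fin 2) + 1) = 1 := rfl
      have h10 : ((1 : Fin 2) + 1) = 0 := rfl
      rw [h01, h10] at hc
      simp only [Matrix.cons_val_zero, Matrix.cons_val_one, Matrix.head_cons] at hc
      norm_num at hc
      nlinarith [hc]
    · intro t; fin_cases t <;> simpa
    · intro t
      fin_cases t
      · exact h2
      · exact h3

/-- `sigma` is opposite to the sign of any witnessing row product -/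
lemma sigma_spec (Γ : Matrix (Fin n) (Fin m) ℝ) (hno : ¬ (SRofMatrix Γ).HasOCycle)
    (i j : Fin m) (k : Fin n) (hij : i ≠ j) (h1 : Γ k i ≠ 0) (h2 : Γ k j ≠ 0) :
    sigma Γ i j * (Γ k i * Γ k j) < 0 := by
  have hex : ∃ k, Γ k i ≠ 0 ∧ Γ k j ≠ 0 := ⟨k, h1, h2⟩
  obtain ⟨h0i, h0j⟩ := hex.choose_spec
  have hpos := A0 Γ hno i j hex.choose k hij h0i h0j h1 h2
  rw [sigma, dif_pos hex]
  rcases lt_trichotomy (Γ hex.choose i * Γ hex.choose j) 0 with h | h | h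
  · rw [if_neg (by linarith)]
    have hP : Γ k i * Γ k j < 0 := by nlinarith
    linarith
  · exact absurd h (mul_ne_zero h0i h0j)
  · rw [if_pos h]
    have hP : 0 < Γ k i * Γ k j := by nlinarith
    linarith

lemma sigma_symm (Γ : Matrix (Fin n) (Fin m) ℝ) (hno : ¬ (SRofMatrix Γ).HasOCycle)
    (i j : Fin m) (h : (colGraph Γ).Adj i j) : sigma Γ i j = sigma Γ j i := by
  obtain ⟨hij, k, h1, h2⟩ := h
  have hA := sigma_spec Γ hno i j k hij h1 h2
  have hB := sigma_spec Γ hno j i k hij.symm h2 h1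
  rw [mul_comm (Γ k j) (Γ k i)] at hB
  rcases sigma_pm Γ i j with hs | hs <;> rcases sigma_pm Γ j i with ht | ht <;>
    rw [hs, ht] <;> rw [hs] at hA <;> rw [ht] at hB <;> first | rfl | nlinarith

/-- the closed-cycle sign condition on the column graph -/
lemma cycleCond (Γ : Matrix (Fin n) (Fin m) ℝ)
    (hrow : ∀ k : Fin n, ∀ i j l : Fin m,
      Γ k i ≠ 0 → Γ k j ≠ 0 → Γ k l ≠ 0 → i = j ∨ i = l ∨ j = l)
    (hno : ¬ (SRofMatrix Γ).HasOCycle)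
    (L : ℕ) [NeZero L] (hL : 2 ≤ L) (x : Fin L → Fin m)
    (hx : Function.Injective x)
    (hadj : ∀ t : Fin L, (colGraph Γ).Adj (x t) (x (t + 1))) :
    ∏ t, sigma Γ (x t) (x (t + 1)) = 1 := by
  have hone : ((1 : Fin L) : ℕ) = 1 := by
    rw [Fin.val_one']; exact Nat.mod_eq_of_lt (by omega)
  have hone0 : (1 : Fin L) ≠ 0 := by
    intro hc
    have h' := congrArg Fin.val hc
    rw [hone] at h'
    simp at h'
  have hex : ∀ t : Fin L, ∃ k, Γ k (x t) ≠ 0 ∧ Γ k (x (t + 1)) ≠ 0 := fun t => (hadj t).2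
  set K : Fin L → Fin n := fun t => (hex t).choose with hKdef
  have hK1 : ∀ t, Γ (K t) (x t) ≠ 0 := fun t => (hex t).choose_spec.1
  have hK2 : ∀ t, Γ (K t) (x (t + 1)) ≠ 0 := fun t => (hex t).choose_spec.2
  have hPP : 0 < (-1 : ℝ) ^ L * ∏ t, (Γ (K t) (x t) * Γ (K t) (x (t + 1))) := by
    rcases eq_or_lt_of_le hL with hL2 | hL2
    · -- L = 2
      subst hL2
      rw [Fin.prod_univ_two]
      have h01 : ((0 : Fin 2) + 1) = 1 := rfl
      have h10 : ((1 : Fin 2) + 1) = 0 := rfl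
      rw [h01, h10]
      have := A0 Γ hno (x 0) (x 1) (K 0) (K 1) (fun hc => hone0 (hx hc ▸ rfl))
        (hK1 0) (by have := hK2 0; rwa [h01] at this)
        (by have := hK2 1; rwa [h10] at this) (hK1 1)
      norm_num
      nlinarith [this]
    · -- 2 < L : the rows are pairwise distinct
      have hKinj : Function.Injective K := by
        intro t s hts
        by_contra hne
        have hts1 : Γ (K t) (x s) ≠ 0 := by rw [hts]; exact hK1 s
        have hts2 : Γ (K t) (x (s + 1)) ≠ 0 := by rw [hts]; exact hK2 s
        have r1 := hrow (K t) (x t) (x (t + 1)) (x s) (hK1 t) (hK2 t) hts1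
        have r2 := hrow (K t) (x t) (x (t + 1)) (x (s + 1)) (hK1 t) (hK2 t) hts2
        have hself : ∀ u : Fin L, x u ≠ x (u + 1) := by
          intro u hc
          exact hone0 (left_eq_add.mp (hx hc))
        rcases r1 with h | h | h
        · exact hself t h
        · exact hne (hx h)
        · have hs1 : s = t + 1 := (hx h).symm
          rcases r2 with h' | h' | h'
          · exact hself t h'
          · have ht1 : t = s + 1 := hx h'
            rw [hs1, add_assoc] at ht1
            have h2z : (1 : Fin L) + 1 = 0 := (left_eq_add.mp ht1)
            have hv := congrArg Fin.val h2z
            rw [Fin.val_add, hone, Fin.val_zero] at hv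
            rw [Nat.mod_eq_of_lt (by omega)] at hv
            exact absurd hv (by omega)
          · exact hne (by have := hx h'; rwa [add_left_inj] at this)
      exact coreC Γ hno L hL x K hx hKinj hK1 hK2
  -- convert to the sigma product
  have hneg : ∀ t : Fin L, Γ (K t) (x t) * Γ (K t) (x (t + 1)) =
      (-1) * (sigma Γ (x t) (x (t + 1)) * |Γ (K t) (x t) * Γ (K t) (x (t + 1))|) := by
    intro t
    have hA := sigma_spec Γ hno (x t) (x (t + 1)) (K t)
      (fun hc => hone0 (left_eq_add.mp (hx hc))) (hK1 t) (hK2 t)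
    rcases sigma_pm Γ (x t) (x (t + 1)) with hs | hs <;> rw [hs] at hA ⊢
    · rw [abs_of_neg (by linarith)]; ring
    · rw [abs_of_pos (by linarith)]; ring
  rw [Finset.prod_congr rfl fun t _ => hneg t] at hPP
  rw [Finset.prod_mul_distrib, Finset.prod_mul_distrib, Finset.prod_const,
    Finset.card_univ, Fintype.card_fin] at hPP
  have h11R : ((-1 : ℝ) ^ L) * ((-1 : ℝ) ^ L) = 1 := by
    rw [← pow_add]; exact Even.neg_one_pow ⟨L, rfl⟩
  have habs : 0 < ∏ t : Fin L, |Γ (K t) (x t) * Γ (K t) (x (t + 1))| :=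
    Finset.prod_pos fun t _ => abs_pos.2 (mul_ne_zero (hK1 t) (hK2 t))
  rw [← mul_assoc, ← mul_assoc, h11R, one_mul] at hPP
  have hsig : 0 < ∏ t : Fin L, sigma Γ (x t) (x (t + 1)) := by
    by_contra hc
    push_neg at hc
    nlinarith [hPP, habs, hc]
  rcases prod_pm Finset.univ (fun t : Fin L => sigma Γ (x t) (x (t + 1)))
      (fun t _ => sigma_pm Γ _ _) with h | h
  · exact h
  · rw [h] at hsig; linarith

end MatrixSide

section SortSec

open Finset

lemma sortD {V : Type} [Fintype V] [DecidableEq V] (H : SimpleGraph V) (σ : V → V → ℝ)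
    (hσ1 : ∀ i j, σ i j = 1 ∨ σ i j = -1)
    (hσs : ∀ i j, H.Adj i j → σ i j = σ j i)
    (hcyc : ∀ (L : ℕ) [NeZero L], 2 ≤ L → ∀ x : Fin L → V, Function.Injective x →
      (∀ t : Fin L, H.Adj (x t) (x (t + 1))) → ∏ t, σ (x t) (x (t + 1)) = 1) :
    ∃ d : V → ℝ, (∀ i, d i = 1 ∨ d i = -1) ∧ ∀ i j, H.Adj i j → d i * d j = σ i j := by
  classical
  have main : ∀ s : Finset (Sym2 V), ↑s ⊆ H.edgeSet →
      ∃ d : V → ℝ, (∀ i, d i = 1 ∨ d i = -1) ∧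
        ∀ i j, H.Adj i j → s(i, j) ∈ s → d i * d j = σ i j := by
    intro s
    induction s using Finset.induction_on with
    | empty => exact fun _ => ⟨fun _ => 1, fun _ => Or.inl rfl,
        fun i j _ h => absurd h (by simp)⟩
    | @insert e s he ih =>
      induction e using Sym2.ind with
      | _ u v =>
      intro hsub
      have hssub : ↑s ⊆ H.edgeSet := fun x hx => hsub (by simp [hx])
      obtain ⟨d, hd1, hd⟩ := ih hssub
      have hadj : H.Adj u v := (H.mem_edgeSet).1 (hsub (by simp))
      have huv : u ≠ v := hadj.ne
      set G' := SimpleGraph.fromEdgeSet (↑s : Set (Sym2 V)) with hG'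
      have hle : ∀ a b, G'.Adj a b → H.Adj a b := by
        intro a b hab
        rw [hG', SimpleGraph.fromEdgeSet_adj] at hab
        exact (H.mem_edgeSet).1 (hssub hab.1)
      have hmem : ∀ a b, G'.Adj a b → s(a, b) ∈ s := by
        intro a b hab
        rw [hG', SimpleGraph.fromEdgeSet_adj] at hab
        exact_mod_cast hab.1
      -- if v reaches u in G', the new constraint is already satisfied by d
      have hkey : G'.Reachable v u → d u * d v = σ u v := by
        intro hr
        obtain ⟨w⟩ := hr
        have hp : w.bypass.IsPath := SimpleGraph.Walk.bypass_isPath w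
        set p := w.bypass with hpdef
        set l := p.support with hl
        have hnodup : l.Nodup := hp.support_nodup
        have hlen : l.length = p.length + 1 := p.length_support
        set N := p.length with hN
        have hlnil : l ≠ [] := by
          intro hc; rw [hc] at hlen; simp at hlen
        have hhead : l.get ⟨0, by omega⟩ = v := by
          have h0 : l = v :: l.tail := p.support_eq_cons
          exact (List.get_of_eq h0 ⟨0, by omega⟩).trans rfl
        have hlast : l.get ⟨N, by omega⟩ = u := by
          have h1 : l.getLast hlnil = u := p.getLast_support
          rw [List.getLast_eq_getElem] at h1
          have h2 : l.get ⟨N, by omega⟩ = l.get ⟨l.length - 1, by omega⟩ := by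
            congr 1
            exact Fin.ext (by simp; omega)
          exact h2.trans h1
        have hN1 : 1 ≤ N := by
          rcases Nat.eq_zero_or_pos N with h0 | h0
          · exfalso
            have hNv : l.get ⟨N, by omega⟩ = l.get ⟨0, by omega⟩ := by
              congr 1
              exact Fin.ext h0
            exact huv ((hlast.symm.trans hNv).trans hhead)
          · exact h0
        have h1m : ((1 : Fin (N + 1)) : ℕ) = 1 := by
          rw [Fin.val_one']; exact Nat.mod_eq_of_lt (by omega)
        set x : Fin (N + 1) → V := fun t => l.get (Fin.cast hlen.symm t) with hxdef
        have hxinj : Function.Injective x :=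
          (List.nodup_iff_injective_get.1 hnodup).comp (Fin.cast_injective _)
        have hchain : List.IsChain G'.Adj l := p.isChain_adj_support
        rw [List.isChain_iff_getElem] at hchain
        have hGadj : ∀ (a : ℕ) (ha : a < N), G'.Adj (l.get ⟨a, by omega⟩) (l.get ⟨a + 1, by omega⟩) := by
          intro a ha
          exact hchain a (by omega)
        have hwrap : ∀ t : Fin (N + 1), t.val < N → ((t + 1 : Fin (N + 1)) : ℕ) = t.val + 1 := by
          intro t ht
          rw [Fin.val_add, h1m]
          exact Nat.mod_eq_of_lt (by omega)
        have hxadj : ∀ t : Fin (N + 1), H.Adj (x t) (x (t + 1)) := by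
          intro t
          by_cases ht : t.val < N
          · refine hle _ _ ?_
            have h1 : x t = l.get ⟨t.val, by rw [hlen]; exact t.isLt⟩ := rfl
            have h2 : x (t + 1) = l.get ⟨((t + 1 : Fin (N+1)) : ℕ), by rw [hlen]; exact (t+1).isLt⟩ := rfl
            rw [h1, h2]
            have := hGadj t.val ht
            convert this using 3
            exact hwrap t ht
          · have htN : t.val = N := by omega
            have h1 : x t = u := by
              rw [hxdef]
              show l.get _ = u
              rw [← hlast]; congr 1; rw [Fin.ext_iff]; exact htN
            have h2 : x (t + 1) = v := by
              have hz : (t + 1 : Fin (N + 1)) = 0 := by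
                rw [Fin.ext_iff, Fin.val_add, h1m, htN, Fin.val_zero]
                exact Nat.mod_self _
              rw [hz, hxdef]
              show l.get _ = v
              rw [← hhead]; congr 1
            rw [h1, h2]
            exact hadj
        have hprod := hcyc (N + 1) (by omega) x hxinj hxadj
        rw [Fin.prod_univ_castSucc] at hprod
        -- last factor is σ u v
        have hlf1 : x (Fin.last N) = u := by
          have h' : x (Fin.last N) = l.get ⟨N, by omega⟩ := by
            show l.get _ = l.get _
            congr 1
          rw [h', hlast]
        have hlf2 : x (Fin.last N + 1) = v := by
          have hz : (Fin.last N + 1 : Fin (N + 1)) = 0 := by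
            rw [Fin.ext_iff, Fin.val_add, h1m, Fin.val_last, Fin.val_zero]
            exact Nat.mod_self _
          rw [hz]
          have h' : x 0 = l.get ⟨0, by omega⟩ := by
            show l.get _ = l.get _
            congr 1
          rw [h', hhead]
        have hlastf : σ (x (Fin.last N)) (x (Fin.last N + 1)) = σ u v := by
          rw [hlf1, hlf2]
        -- middle factors telescope
        set y : ℕ → V := fun i => if h : i < N + 1 then l.get ⟨i, by omega⟩ else v with hy
        have hmid : ∀ t : Fin N, σ (x t.castSucc) (x (t.castSucc + 1)) = d (y t.val) * d (y (t.val + 1)) := by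
          intro t
          have ht : t.val < N := t.isLt
          have hG := hGadj t.val ht
          have e1 : x t.castSucc = y t.val := by
            rw [hy]; simp only [dif_pos (show t.val < N + 1 by omega)]; rfl
          have e2 : x (t.castSucc + 1) = y (t.val + 1) := by
            rw [hy]; simp only [dif_pos (show t.val + 1 < N + 1 by omega)]
            show l.get _ = l.get _
            congr 1
            rw [Fin.ext_iff]
            show ((t.castSucc + 1 : Fin (N+1)) : ℕ) = t.val + 1
            exact hwrap t.castSucc ht
          rw [e1, e2]
          have hy1 : y t.val = l.get ⟨t.val, by omega⟩ := by
            rw [hy]; simp only [dif_pos (show t.val < N + 1 by omega)]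
          have hy2 : y (t.val + 1) = l.get ⟨t.val + 1, by omega⟩ := by
            rw [hy]; simp only [dif_pos (show t.val + 1 < N + 1 by omega)]
          rw [hy1, hy2]
          exact (hd _ _ (hle _ _ hG) (hmem _ _ hG)).symm
        rw [Finset.prod_congr rfl fun t _ => hmid t, hlastf] at hprod
        have htel : ∏ t : Fin N, (d (y t.val) * d (y (t.val + 1))) = d (y 0) * d (y N) :=
          (Fin.prod_univ_eq_prod_range (fun i => d (y i) * d (y (i + 1))) N).trans
            (tele_prod N (fun i => d (y i))
              (fun i => by
                show d (y i) * d (y i) = 1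
                rcases hd1 (y i) with h | h <;> rw [h] <;> norm_num))
        rw [htel] at hprod
        have hy0 : y 0 = v := by
          rw [hy]; simp only [dif_pos (show 0 < N + 1 by omega)]; exact hhead
        have hyN : y N = u := by
          rw [hy]; simp only [dif_pos (show N < N + 1 by omega)]; exact hlast
        rw [hy0, hyN] at hprod
        -- conclude
        rcases hσ1 u v with h | h <;> rw [h] at hprod ⊢ <;>
          rcases hd1 u with h1 | h1 <;> rw [h1] at hprod ⊢ <;> linarith
      by_cases hduv : d u * d v = σ u v
      · refine ⟨d, hd1, fun i j hij hmem' => ?_⟩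
        rw [Finset.mem_insert] at hmem'
        rcases hmem' with hm | hm
        · rw [Sym2.eq_iff] at hm
          rcases hm with ⟨rfl, rfl⟩ | ⟨rfl, rfl⟩
          · exact hduv
          · rw [hσs _ _ hij, mul_comm]
            exact hduv
        · exact hd i j hij hm
      · have hnr : ¬ G'.Reachable v u := fun hr => hduv (hkey hr)
        refine ⟨fun i => if G'.Reachable v i then -d i else d i, ?_, ?_⟩
        · intro i
          show (if G'.Reachable v i then -d i else d i) = 1 ∨ (if G'.Reachable v i then -d i else d i) = -1
          split_ifs with h
          · rcases hd1 i with h' | h' <;> rw [h'] <;> simp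
          · exact hd1 i
        · intro i j hij hmem'
          show (if G'.Reachable v i then -d i else d i) * (if G'.Reachable v j then -d j else d j) = σ i j
          rw [Finset.mem_insert] at hmem'
          rcases hmem' with hm | hm
          · have hflip : d u * d v = -σ u v := by
              rcases hσ1 u v with h | h <;> rcases hd1 u with h1 | h1 <;>
                rcases hd1 v with h2 | h2 <;> rw [h, h1, h2] at hduv ⊢ <;> norm_num at hduv <;> norm_num
            rw [Sym2.eq_iff] at hm
            have hvv : G'.Reachable v v := SimpleGraph.Reachable.refl v
            rcases hm with ⟨rfl, rfl⟩ | ⟨rfl, rfl⟩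
            · rw [if_neg hnr, if_pos hvv]
              rw [show d i * -d j = -(d i * d j) by ring, hflip]; ring
            · rw [if_pos hvv, if_neg hnr]
              rw [hσs _ _ hij]
              rw [show -d i * d j = -(d j * d i) by ring, hflip]; ring
          · have hG : G'.Adj i j := by
              rw [hG', SimpleGraph.fromEdgeSet_adj]
              exact ⟨by exact_mod_cast hm, hij.ne⟩
            have hiff : G'.Reachable v i ↔ G'.Reachable v j :=
              ⟨fun h => h.trans hG.reachable, fun h => h.trans hG.symm.reachable⟩
            by_cases hri : G'.Reachable v i
            · rw [if_pos hri, if_pos (hiff.1 hri),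
                show -d i * -d j = d i * d j by ring]
              exact hd i j hij hm
            · rw [if_neg hri, if_neg (fun h => hri (hiff.2 h))]
              exact hd i j hij hm
  obtain ⟨d, hd1, hd⟩ := main H.edgeSet.toFinset (by simp)
  exact ⟨d, hd1, fun i j hij => hd i j hij (by rw [Set.mem_toFinset]; exact (H.mem_edgeSet).2 hij)⟩

end SortSec

/-- If every row of `Γ` has at most two nonzero entries (i.e. the
SR graph of `Γ` has S-degree at most 2) and the SR graph of `Γ` contains no
o-cycle, then `Γ` is R-sortable: there is a signing `d : {±1}^m` of the columns
such that `d i * d j * Γ k i * Γ k j ≤ 0` for every row `k` and all distinct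
columns `i ≠ j`. -/
theorem stmt4 {n m : ℕ} (Γ : Matrix (Fin n) (Fin m) ℝ)
    (hrow : ∀ k : Fin n, ∀ i j l : Fin m,
      Γ k i ≠ 0 → Γ k j ≠ 0 → Γ k l ≠ 0 → i = j ∨ i = l ∨ j = l)
    (hno : ¬ (SRofMatrix Γ).HasOCycle) :
    ∃ d : Fin m → ℝ, (∀ i, d i = 1 ∨ d i = -1) ∧
      ∀ (k : Fin n) (i j : Fin m), i ≠ j → d i * d j * Γ k i * Γ k j ≤ 0 := by
  obtain ⟨d, hd1, hd⟩ := sortD (colGraph Γ) (sigma Γ) (sigma_pm Γ) (sigma_symm Γ hno)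
    (cycleCond Γ hrow hno)
  refine ⟨d, hd1, fun k i j hij => ?_⟩
  by_cases h1 : Γ k i = 0
  · rw [h1, mul_zero, zero_mul]
  by_cases h2 : Γ k j = 0
  · rw [h2, mul_zero]
  have hadj : (colGraph Γ).Adj i j := ⟨hij, k, h1, h2⟩
  have hde := hd i j hadj
  have hs := sigma_spec Γ hno i j k hij h1 h2
  calc d i * d j * Γ k i * Γ k j = sigma Γ i j * (Γ k i * Γ k j) := by rw [← hde]; ring
    _ ≤ 0 := le_of_lt hs
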